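/- The irrational rotation algebra A has no zero divisors: if a, b ∈ A with a b = 0, then a = 0 or b = 0. -/

import Mathlib

/-- The irrational rotation algebra has no zero divisors:
if `a b = 0` then `a = 0` or `b = 0`. -/
theorem rotationAlgebra_no_zero_divisors
    (lam : ℝ) (hlam : Irrational (lam / (2 * Real.pi)))
    (A : Type) [Ring A] [Algebra ℂ A]
    (a : ℤ → ℤ → A)
    (b : Module.Basis (ℤ × ℤ) ℂ A) (hb : ∀ n l : ℤ, b (n, l) = a n l)
    (hmul : ∀ n₁ l₁ n₂ l₂ : ℤ,
      a n₁ l₁ * a n₂ l₂ =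
        Complex.exp (Complex.I * (lam * n₁ * l₂)) • a (n₁ + n₂) (l₁ + l₂)) :
    ∀ x y : A, x * y = 0 → x = 0 ∨ y = 0 := by
  intro x y hxy
  by_contra hcon
  push_neg at hcon
  obtain ⟨hx, hy⟩ := hcon
  -- multiplication on basis elements
  set e : ℤ × ℤ → ℤ × ℤ → ℂ :=
    fun i j => Complex.exp (Complex.I * (lam * i.1 * j.2)) with he
  have hbmul : ∀ i j : ℤ × ℤ, b i * b j = e i j • b (i + j) := by
    rintro ⟨n₁, l₁⟩ ⟨n₂, l₂⟩
    simp only [hb, he, Prod.mk_add_mk]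
    exact hmul n₁ l₁ n₂ l₂
  set c := b.repr x with hc
  set d := b.repr y with hd
  have hcne : c ≠ 0 := fun h => hx (by
    have := b.repr.map_eq_zero_iff.mp (hc ▸ h); exact this)
  have hdne : d ≠ 0 := fun h => hy (by
    have := b.repr.map_eq_zero_iff.mp (hd ▸ h); exact this)
  have hcs : c.support.Nonempty := Finsupp.support_nonempty_iff.mpr hcne
  have hds : d.support.Nonempty := Finsupp.support_nonempty_iff.mpr hdne
  obtain ⟨m, hm, hmmax⟩ := c.support.exists_max_image (fun p => (toLex p : ℤ ×ₗ ℤ)) hcs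
  obtain ⟨M, hM, hMmax⟩ := d.support.exists_max_image (fun p => (toLex p : ℤ ×ₗ ℤ)) hds
  -- expand x and y
  have hxe : x = ∑ i ∈ c.support, c i • b i := by
    conv_lhs => rw [← Module.Basis.linearCombination_repr b x]
    rw [Finsupp.linearCombination_apply, Finsupp.sum]
  have hye : y = ∑ j ∈ d.support, d j • b j := by
    conv_lhs => rw [← Module.Basis.linearCombination_repr b y]
    rw [Finsupp.linearCombination_apply, Finsupp.sum]
  have hprod : x * y = ∑ p ∈ c.support ×ˢ d.support,
      (c p.1 * d p.2 * e p.1 p.2) • b (p.1 + p.2) := by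
    rw [hxe, hye, Finset.sum_mul_sum, ← Finset.sum_product']
    refine Finset.sum_congr rfl fun p _ => ?_
    rw [smul_mul_smul_comm, hbmul, smul_smul, mul_assoc]
  -- coefficient of x*y at m + M
  have hcoef : (b.repr (x * y)) (m + M) =
      ∑ p ∈ c.support ×ˢ d.support,
        (Finsupp.single (p.1 + p.2) (c p.1 * d p.2 * e p.1 p.2) : (ℤ × ℤ) →₀ ℂ)
          (m + M) := by
    rw [hprod, map_sum, Finsupp.finset_sum_apply]
    refine Finset.sum_congr rfl fun p _ => ?_
    rw [map_smul, Module.Basis.repr_self]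
    simp [Finsupp.smul_single]
  have huniq : ∀ p ∈ c.support ×ˢ d.support, p ≠ (m, M) →
      (Finsupp.single (p.1 + p.2) (c p.1 * d p.2 * e p.1 p.2) : (ℤ × ℤ) →₀ ℂ)
        (m + M) = 0 := by
    rintro ⟨i, j⟩ hp hne
    rw [Finset.mem_product] at hp
    have hi : (toLex i : ℤ ×ₗ ℤ) ≤ toLex m := hmmax i hp.1
    have hj : (toLex j : ℤ ×ₗ ℤ) ≤ toLex M := hMmax j hp.2
    have hij : i + j ≠ m + M := by
      intro h
      have hadd : (toLex i : ℤ ×ₗ ℤ) + toLex j = toLex m + toLex M := by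
        exact congrArg toLex h
      have him : (toLex i : ℤ ×ₗ ℤ) = toLex m := by
        by_contra hne'
        have : (toLex i : ℤ ×ₗ ℤ) + toLex j < toLex m + toLex M :=
          add_lt_add_of_lt_of_le (lt_of_le_of_ne hi hne') hj
        exact absurd hadd this.ne
      have hjM : (toLex j : ℤ ×ₗ ℤ) = toLex M := by
        have := hadd
        rw [him] at this
        exact add_left_cancel this
      have him' : i = m := by simpa using congrArg (⇑ofLex) him
      have hjM' : j = M := by simpa using congrArg (⇑ofLex) hjM
      exact hne (by rw [him', hjM'])
    simp [Finsupp.single_apply, hij]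
  have hmain : (b.repr (x * y)) (m + M) = c m * d M * e m M := by
    rw [hcoef, Finset.sum_eq_single_of_mem (m, M) (Finset.mem_product.mpr ⟨hm, hM⟩)
      huniq]
    simp [Finsupp.single_apply]
  rw [hxy, map_zero, Finsupp.coe_zero, Pi.zero_apply] at hmain
  have hcm : c m ≠ 0 := Finsupp.mem_support_iff.mp hm
  have hdM : d M ≠ 0 := Finsupp.mem_support_iff.mp hM
  have heN : e m M ≠ 0 := Complex.exp_ne_zero _
  exact (mul_ne_zero (mul_ne_zero hcm hdM) heN) hmain.symm
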